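/- In the conditional joint-density setup for (U, W, Z) given A = a: assume (i) W ⟂ Z | U holds in density form, i.e. f(u,w,z)·fU(u) = fUW(u,w)·fUZ(u,z) almost everywhere; (ii) fU(u) > 0 for μ-almost every u; and (iii) completeness: for every measurable g : U → ℝ such that g·fU is μ-integrable, if ∫ g(u) fUZ(u,z) dμ(u) = 0 for ρ-almost every z, then g(u)·fU(u) = 0 for μ-almost every u. Then for every bounded measurable ℓ : W → ℝ: if ∫∫ ℓ(w) f(u,w,z) dμ(u) dν(w) = 0 for ρ-almost every z, then ∫ ℓ(w) fUW(u,w) dν(w) = 0 for μ-almost every u. -/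

import Mathlib

open MeasureTheory

/-- Null-space lemma: in the conditional joint-density setup for `(U, W, Z)`
given `A = a`, under `W ⟂ Z | U` (density form), positivity of `fU`, and completeness of
`fUZ`, every bounded measurable `ℓ : W → ℝ` with `E[ℓ(W) | Z = z, A = a] = 0` for a.e. `z`
(expressed as `∫∫ ℓ f dμ dν = 0` for ρ-a.e. `z`) satisfies `E[ℓ(W) | U = u, A = a] = 0`
(expressed as `∫ ℓ(w) fUW(u,w) dν(w) = 0`) for μ-a.e. `u`. -/
theorem null_space_subset_lemma
    {U W Z : Type*} [MeasurableSpace U] [MeasurableSpace W] [MeasurableSpace Z]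
    (μ : Measure U) (ν : Measure W) (ρ : Measure Z)
    [SigmaFinite μ] [SigmaFinite ν] [SigmaFinite ρ]
    (f : U × W × Z → ℝ) (f_meas : Measurable f) (f_nonneg : ∀ x, 0 ≤ f x)
    (f_int : Integrable f (μ.prod (ν.prod ρ)))
    (fU : U → ℝ) (hfU : ∀ u, fU u = ∫ z, ∫ w, f (u, w, z) ∂ν ∂ρ)
    (fUW : U × W → ℝ) (hfUW : ∀ u w, fUW (u, w) = ∫ z, f (u, w, z) ∂ρ)
    (fUZ : U × Z → ℝ) (hfUZ : ∀ u z, fUZ (u, z) = ∫ w, f (u, w, z) ∂ν)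
    (ci : ∀ᵐ x ∂μ.prod (ν.prod ρ), f x * fU x.1 = fUW (x.1, x.2.1) * fUZ (x.1, x.2.2))
    (hfU_pos : ∀ᵐ u ∂μ, 0 < fU u)
    (compl : ∀ g : U → ℝ, Measurable g → Integrable (fun u => g u * fU u) μ →
      (∀ᵐ z ∂ρ, ∫ u, g u * fUZ (u, z) ∂μ = 0) → ∀ᵐ u ∂μ, g u * fU u = 0) :
    ∀ ℓ : W → ℝ, Measurable ℓ → (∃ C, ∀ w, |ℓ w| ≤ C) →
      (∀ᵐ z ∂ρ, ∫ w, ∫ u, ℓ w * f (u, w, z) ∂μ ∂ν = 0) →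
      ∀ᵐ u ∂μ, ∫ w, ℓ w * fUW (u, w) ∂ν = 0 := by
  intro ℓ ℓ_meas hbdd hz
  obtain ⟨C, hC⟩ := hbdd
  set C' : ℝ := max C 0 with hC'def
  have hC'0 : 0 ≤ C' := le_max_right _ _
  have hℓC' : ∀ w, |ℓ w| ≤ C' := fun w => (hC w).trans (le_max_left _ _)
  -- measurability of the marginal densities
  have fUZ_meas : Measurable fUZ := by
    have hm : Measurable fun p : (U × Z) × W => f (p.1.1, p.2, p.1.2) :=
      f_meas.comp (by fun_prop)
    have h := hm.stronglyMeasurable.integral_prod_right' (ν := ν)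
    have hfe : fUZ = fun p : U × Z => ∫ w, f (p.1, w, p.2) ∂ν := by
      funext p; exact hfUZ p.1 p.2
    rw [hfe]; exact h.measurable
  have fUW_meas : Measurable fUW := by
    have hm : Measurable fun p : (U × W) × Z => f (p.1.1, p.1.2, p.2) :=
      f_meas.comp (by fun_prop)
    have h := hm.stronglyMeasurable.integral_prod_right' (ν := ρ)
    have hfe : fUW = fun p : U × W => ∫ z, f (p.1, p.2, z) ∂ρ := by
      funext p; exact hfUW p.1 p.2
    rw [hfe]; exact h.measurable
  have fU_meas : Measurable fU := by
    have h := fUZ_meas.stronglyMeasurable.integral_prod_right' (ν := ρ)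
    have hfe : fU = fun u : U => ∫ z, fUZ (u, z) ∂ρ := by
      funext u
      rw [hfU u]
      exact integral_congr_ae (Filter.Eventually.of_forall fun z => (hfUZ u z).symm)
    rw [hfe]; exact h.measurable
  have fUW_nonneg : ∀ p : U × W, 0 ≤ fUW p := fun p => by
    rw [show p = (p.1, p.2) from rfl, hfUW p.1 p.2]
    exact integral_nonneg fun z => f_nonneg _
  -- integrability of `f` reorganized on `(U × W) × Z`
  have mp1 : MeasurePreserving (MeasurableEquiv.prodAssoc : (U × W) × Z ≃ᵐ U × W × Z)
      ((μ.prod ν).prod ρ) (μ.prod (ν.prod ρ)) := measurePreserving_prodAssoc μ ν ρ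
  have F1_int : Integrable (fun q : (U × W) × Z => f (q.1.1, q.1.2, q.2))
      ((μ.prod ν).prod ρ) := by
    have := (mp1.integrable_comp f_int.aestronglyMeasurable).mpr f_int
    exact this
  -- integrability of `f` reorganized on `(U × Z) × W`
  have mp2 : MeasurePreserving
      ((Prod.map (id : U → U) (Prod.swap : Z × W → W × Z)) ∘
        (MeasurableEquiv.prodAssoc : (U × Z) × W ≃ᵐ U × Z × W))
      ((μ.prod ρ).prod ν) (μ.prod (ν.prod ρ)) :=
    ((MeasurePreserving.id μ).prod (Measure.measurePreserving_swap (μ := ρ) (ν := ν))).comp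
      (measurePreserving_prodAssoc μ ρ ν)
  -- conditional independence in the `(U × Z) × W` order
  have ci2 : ∀ᵐ q ∂(μ.prod ρ).prod ν,
      f (q.1.1, q.2, q.1.2) * fU q.1.1 = fUW (q.1.1, q.2) * fUZ (q.1.1, q.1.2) := by
    have := mp2.quasiMeasurePreserving.ae ci
    simpa [MeasurableEquiv.prodAssoc, Function.comp] using this
  have ci3 : ∀ᵐ p ∂μ.prod ρ, ∀ᵐ w ∂ν,
      f (p.1, w, p.2) * fU p.1 = fUW (p.1, w) * fUZ (p.1, p.2) :=
    Measure.ae_ae_of_ae_prod ci2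
  -- slicewise integrability in `u`
  have hI : ∀ᵐ u ∂μ, Integrable (fun p : W × Z => f (u, p.1, p.2)) (ν.prod ρ) := by
    have := f_int.prod_right_ae
    filter_upwards [this] with u hu
    exact hu
  -- for a.e. u, `fUW (u, ·)` is integrable with integral `fU u`
  have hfUW_int : ∀ᵐ u ∂μ, Integrable (fun w => fUW (u, w)) ν := by
    filter_upwards [hI] with u hu
    have := hu.integral_prod_left
    exact this.congr (Filter.Eventually.of_forall fun w => (hfUW u w).symm)
  have hsum : ∀ᵐ u ∂μ, ∫ w, fUW (u, w) ∂ν = fU u := by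
    filter_upwards [hI] with u hu
    have hswap := integral_integral_swap (f := fun w z => f (u, w, z)) hu
    calc ∫ w, fUW (u, w) ∂ν = ∫ w, ∫ z, f (u, w, z) ∂ρ ∂ν :=
          integral_congr_ae (Filter.Eventually.of_forall fun w => hfUW u w)
      _ = ∫ z, ∫ w, f (u, w, z) ∂ν ∂ρ := hswap
      _ = fU u := (hfU u).symm
  -- integrability of fU
  have fU_int : Integrable fU μ := by
    have G_int : Integrable (fun u => ∫ p : W × Z, f (u, p) ∂(ν.prod ρ)) μ :=
      f_int.integral_prod_left
    refine G_int.congr ?_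
    filter_upwards [hI, hsum] with u hu hsu
    have : ∫ p : W × Z, f (u, p) ∂(ν.prod ρ) = ∫ w, ∫ z, f (u, w, z) ∂ρ ∂ν :=
      (integral_integral (f := fun w z => f (u, w, z)) hu).symm
    rw [this, ← hsu]
    exact integral_congr_ae (Filter.Eventually.of_forall fun w => (hfUW u w).symm)
  -- the function h u = ∫ ℓ w * fUW (u, w)
  have h_meas : Measurable fun u => ∫ w, ℓ w * fUW (u, w) ∂ν := by
    have hm : Measurable fun p : U × W => ℓ p.2 * fUW p :=
      (ℓ_meas.comp measurable_snd).mul fUW_meas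
    exact (hm.stronglyMeasurable.integral_prod_right' (ν := ν)).measurable
  have h_bound : ∀ᵐ u ∂μ, |∫ w, ℓ w * fUW (u, w) ∂ν| ≤ C' * fU u := by
    filter_upwards [hfUW_int, hsum] with u hu hsu
    calc |∫ w, ℓ w * fUW (u, w) ∂ν| ≤ ∫ w, ‖ℓ w * fUW (u, w)‖ ∂ν := by
          rw [← Real.norm_eq_abs]; exact norm_integral_le_integral_norm _
      _ ≤ ∫ w, C' * fUW (u, w) ∂ν := by
          refine integral_mono_of_nonneg (Filter.Eventually.of_forall fun w => norm_nonneg _)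
            (hu.const_mul C') (Filter.Eventually.of_forall fun w => ?_)
          show ‖ℓ w * fUW (u, w)‖ ≤ C' * fUW (u, w)
          rw [norm_mul, Real.norm_eq_abs, Real.norm_eq_abs,
            abs_of_nonneg (fUW_nonneg (u, w))]
          exact mul_le_mul_of_nonneg_right (hℓC' w) (fUW_nonneg (u, w))
      _ = C' * fU u := by rw [integral_const_mul, hsu]
  have h_int : Integrable (fun u => ∫ w, ℓ w * fUW (u, w) ∂ν) μ := by
    refine Integrable.mono' (fU_int.const_mul C') h_meas.aestronglyMeasurable ?_
    filter_upwards [h_bound] with u hu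
    simpa [Real.norm_eq_abs] using hu
  -- define g = h / fU
  set g : U → ℝ := fun u => (∫ w, ℓ w * fUW (u, w) ∂ν) / fU u with hg_def
  have g_meas : Measurable g := h_meas.div fU_meas
  have hgh : ∀ᵐ u ∂μ, g u * fU u = ∫ w, ℓ w * fUW (u, w) ∂ν := by
    filter_upwards [hfU_pos] with u hu
    exact div_mul_cancel₀ _ hu.ne'
  have g_int : Integrable (fun u => g u * fU u) μ := h_int.congr (hgh.mono fun u hu => hu.symm)
  -- key pointwise identity on μ ⊗ ρ
  have A1 : ∀ᵐ p ∂μ.prod ρ, 0 < fU p.1 :=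
    Measure.quasiMeasurePreserving_fst.ae hfU_pos
  have key : ∀ᵐ p ∂μ.prod ρ,
      ∫ w, ℓ w * f (p.1, w, p.2) ∂ν = g p.1 * fUZ (p.1, p.2) := by
    filter_upwards [A1, ci3] with p hpos heq
    have step1 : ∫ w, ℓ w * f (p.1, w, p.2) ∂ν
        = ∫ w, (ℓ w * fUW (p.1, w)) * (fUZ (p.1, p.2) / fU p.1) ∂ν := by
      refine integral_congr_ae (heq.mono fun w hw => ?_)
      have hf' : f (p.1, w, p.2) = fUW (p.1, w) * fUZ (p.1, p.2) / fU p.1 := by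
        rw [eq_div_iff hpos.ne']; exact hw
      show ℓ w * f (p.1, w, p.2) = ℓ w * fUW (p.1, w) * (fUZ (p.1, p.2) / fU p.1)
      rw [hf']; ring
    rw [step1, integral_mul_const, hg_def]
    ring
  have key2 : ∀ᵐ q ∂ρ.prod μ,
      ∫ w, ℓ w * f (q.2, w, q.1) ∂ν = g q.2 * fUZ (q.2, q.1) := by
    have := (Measure.measurePreserving_swap (μ := ρ) (ν := μ)).quasiMeasurePreserving.ae key
    simpa [Prod.swap] using this
  have key3 : ∀ᵐ z ∂ρ, ∀ᵐ u ∂μ,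
      ∫ w, ℓ w * f (u, w, z) ∂ν = g u * fUZ (u, z) :=
    Measure.ae_ae_of_ae_prod key2
  -- slicewise integrability in z
  have hIz : ∀ᵐ z ∂ρ, Integrable (fun p : U × W => f (p.1, p.2, z)) (μ.prod ν) := by
    have := F1_int.prod_left_ae
    filter_upwards [this] with z hzint
    exact hzint
  -- the moment condition for g
  have final : ∀ᵐ z ∂ρ, ∫ u, g u * fUZ (u, z) ∂μ = 0 := by
    filter_upwards [hz, key3, hIz] with z h0 hkey hint
    have hint' : Integrable (fun p : U × W => ℓ p.2 * f (p.1, p.2, z)) (μ.prod ν) := by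
      refine hint.bdd_mul ((ℓ_meas.comp measurable_snd).aestronglyMeasurable) (c := C') (Filter.Eventually.of_forall fun p => ?_)
      simpa [Real.norm_eq_abs] using hℓC' p.2
    have hswap := integral_integral_swap (f := fun u w => ℓ w * f (u, w, z)) hint'
    calc ∫ u, g u * fUZ (u, z) ∂μ
        = ∫ u, ∫ w, ℓ w * f (u, w, z) ∂ν ∂μ :=
          integral_congr_ae (hkey.mono fun u hu => hu.symm)
      _ = ∫ w, ∫ u, ℓ w * f (u, w, z) ∂μ ∂ν := hswap
      _ = 0 := h0
  -- apply completeness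
  have hcompl := compl g g_meas g_int final
  filter_upwards [hcompl, hgh] with u h1 h2
  rw [← h2]; exact h1
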